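/- Let A and B be 2×2 matrices with strictly positive entries. Then R(AB) ≤ Φ(R(A), R(B)), where R(M) := max{(m11·m22)/(m12·m21), (m12·m21)/(m11·m22)} and Φ(α,β) := ((1+√(αβ))/(√α+√β))². -/

import Mathlib

lemma key1 (u v X Y : ℝ) (h : 0 ≤ (1 - X^2) * (1 - Y^2)) :
    (X+Y)^2 * ((u+v)*(u+X^2*Y^2*v)) ≤ (1+X*Y)^2 * ((u+X^2*v)*(u+Y^2*v)) := by
  nlinarith [mul_nonneg h (sq_nonneg (u - X*Y*v))]

lemma key2 (u v X Y : ℝ) (hu : 0 ≤ u) (hv : 0 ≤ v) (h : 0 ≤ (1 - X^2) * (1 - Y^2)) :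
    (X+Y)^2 * ((u+X^2*v)*(u+Y^2*v)) ≤ (1+X*Y)^2 * ((u+v)*(u+X^2*Y^2*v)) := by
  nlinarith [mul_nonneg h (sq_nonneg u), mul_nonneg h (sq_nonneg (X*Y*v)),
    mul_nonneg (mul_nonneg h hu) hv,
    mul_nonneg (mul_nonneg (mul_nonneg h hu) hv) (sq_nonneg (X*Y)),
    mul_nonneg (mul_nonneg (mul_nonneg h hu) hv) (sq_nonneg (X+Y))]

lemma master1 (a b c d p q r s X Y : ℝ)
    (ha : 0 < a) (hb : 0 < b) (hc : 0 < c) (hd : 0 < d)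
    (hp : 0 < p) (hq : 0 < q) (hr : 0 < r) (hs : 0 < s)
    (hX : 0 < X) (hY : 0 < Y)
    (hx : a*d = X^2*(b*c)) (hy : p*s = Y^2*(q*r))
    (h : 0 ≤ (1 - X^2) * (1 - Y^2)) :
    max ((a*p+b*r)*(c*q+d*s) / ((a*q+b*s)*(c*p+d*r)))
        ((a*q+b*s)*(c*p+d*r) / ((a*p+b*r)*(c*q+d*s))) ≤ ((1+X*Y)/(X+Y))^2 := by
  have hN : (0:ℝ) < (a*p+b*r)*(c*q+d*s) := by positivity
  have hD : (0:ℝ) < (a*q+b*s)*(c*p+d*r) := by positivity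
  have hap : (0:ℝ) < a*p := by positivity
  have hcq : (0:ℝ) ≤ c*q := by positivity
  have eN : (a*p+b*r)*(c*q+d*s) * (a*p) = c*q*((a*p+b*r)*(a*p + X^2*Y^2*(b*r))) := by
    linear_combination (a*p+b*r)*(p*s*hx + X^2*(b*c)*hy)
  have eD : (a*q+b*s)*(c*p+d*r) * (a*p) = c*q*((a*p + X^2*(b*r))*(a*p + Y^2*(b*r))) := by
    linear_combination (a*p*q*r + b*r*(p*s))*hx + (a*b*c*p + X^2*(b*c)*(b*r))*hy
  rw [max_le_iff]
  constructor
  · rw [div_pow, div_le_div_iff₀ hD (by positivity), ← mul_le_mul_iff_left₀ hap]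
    calc (a*p+b*r)*(c*q+d*s) * (X+Y)^2 * (a*p)
        = c*q*((X+Y)^2 * ((a*p+b*r)*(a*p+X^2*Y^2*(b*r)))) := by
          linear_combination (X+Y)^2 * eN
      _ ≤ c*q*((1+X*Y)^2 * ((a*p+X^2*(b*r))*(a*p+Y^2*(b*r)))) :=
          mul_le_mul_of_nonneg_left (key1 (a*p) (b*r) X Y h) hcq
      _ = (1+X*Y)^2 * ((a*q+b*s)*(c*p+d*r)) * (a*p) := by
          linear_combination (-(1+X*Y)^2) * eD
  · rw [div_pow, div_le_div_iff₀ hN (by positivity), ← mul_le_mul_iff_left₀ hap]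
    calc (a*q+b*s)*(c*p+d*r) * (X+Y)^2 * (a*p)
        = c*q*((X+Y)^2 * ((a*p+X^2*(b*r))*(a*p+Y^2*(b*r)))) := by
          linear_combination (X+Y)^2 * eD
      _ ≤ c*q*((1+X*Y)^2 * ((a*p+b*r)*(a*p+X^2*Y^2*(b*r)))) :=
          mul_le_mul_of_nonneg_left (key2 (a*p) (b*r) X Y hap.le (by positivity) h) hcq
      _ = (1+X*Y)^2 * ((a*p+b*r)*(c*q+d*s)) * (a*p) := by
          linear_combination (-(1+X*Y)^2) * eN

lemma key1' (u v X Y : ℝ) (h : (1 - X^2) * (1 - Y^2) ≤ 0) :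
    (1+X*Y)^2 * ((u+X^2*v)*(u+Y^2*v)) ≤ (X+Y)^2 * ((u+v)*(u+X^2*Y^2*v)) := by
  nlinarith [mul_nonneg (neg_nonneg.mpr h) (sq_nonneg (u - X*Y*v))]

lemma key2' (u v X Y : ℝ) (hu : 0 ≤ u) (hv : 0 ≤ v) (h : (1 - X^2) * (1 - Y^2) ≤ 0) :
    (1+X*Y)^2 * ((u+v)*(u+X^2*Y^2*v)) ≤ (X+Y)^2 * ((u+X^2*v)*(u+Y^2*v)) := by
  have h' := neg_nonneg.mpr h
  nlinarith [mul_nonneg h' (sq_nonneg u), mul_nonneg h' (sq_nonneg (X*Y*v)),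
    mul_nonneg (mul_nonneg h' hu) hv,
    mul_nonneg (mul_nonneg (mul_nonneg h' hu) hv) (sq_nonneg (X*Y)),
    mul_nonneg (mul_nonneg (mul_nonneg h' hu) hv) (sq_nonneg (X+Y))]

lemma master2 (a b c d p q r s X Y : ℝ)
    (ha : 0 < a) (hb : 0 < b) (hc : 0 < c) (hd : 0 < d)
    (hp : 0 < p) (hq : 0 < q) (hr : 0 < r) (hs : 0 < s)
    (hX : 0 < X) (hY : 0 < Y)
    (hx : a*d = X^2*(b*c)) (hy : p*s = Y^2*(q*r))
    (h : (1 - X^2) * (1 - Y^2) ≤ 0) :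
    max ((a*p+b*r)*(c*q+d*s) / ((a*q+b*s)*(c*p+d*r)))
        ((a*q+b*s)*(c*p+d*r) / ((a*p+b*r)*(c*q+d*s))) ≤ ((X+Y)/(1+X*Y))^2 := by
  have hN : (0:ℝ) < (a*p+b*r)*(c*q+d*s) := by positivity
  have hD : (0:ℝ) < (a*q+b*s)*(c*p+d*r) := by positivity
  have hap : (0:ℝ) < a*p := by positivity
  have hcq : (0:ℝ) ≤ c*q := by positivity
  have eN : (a*p+b*r)*(c*q+d*s) * (a*p) = c*q*((a*p+b*r)*(a*p + X^2*Y^2*(b*r))) := by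
    linear_combination (a*p+b*r)*(p*s*hx + X^2*(b*c)*hy)
  have eD : (a*q+b*s)*(c*p+d*r) * (a*p) = c*q*((a*p + X^2*(b*r))*(a*p + Y^2*(b*r))) := by
    linear_combination (a*p*q*r + b*r*(p*s))*hx + (a*b*c*p + X^2*(b*c)*(b*r))*hy
  have hXY1 : (0:ℝ) < 1 + X*Y := by positivity
  rw [max_le_iff]
  constructor
  · rw [div_pow, div_le_div_iff₀ hD (by positivity), ← mul_le_mul_iff_left₀ hap]
    calc (a*p+b*r)*(c*q+d*s) * (1+X*Y)^2 * (a*p)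
        = c*q*((1+X*Y)^2 * ((a*p+b*r)*(a*p+X^2*Y^2*(b*r)))) := by
          linear_combination (1+X*Y)^2 * eN
      _ ≤ c*q*((X+Y)^2 * ((a*p+X^2*(b*r))*(a*p+Y^2*(b*r)))) :=
          mul_le_mul_of_nonneg_left (key2' (a*p) (b*r) X Y hap.le (by positivity) h) hcq
      _ = (X+Y)^2 * ((a*q+b*s)*(c*p+d*r)) * (a*p) := by
          linear_combination (-(X+Y)^2) * eD
  · rw [div_pow, div_le_div_iff₀ hN (by positivity), ← mul_le_mul_iff_left₀ hap]
    calc (a*q+b*s)*(c*p+d*r) * (1+X*Y)^2 * (a*p)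
        = c*q*((1+X*Y)^2 * ((a*p+X^2*(b*r))*(a*p+Y^2*(b*r)))) := by
          linear_combination (1+X*Y)^2 * eD
      _ ≤ c*q*((X+Y)^2 * ((a*p+b*r)*(a*p+X^2*Y^2*(b*r)))) :=
          mul_le_mul_of_nonneg_left (key1' (a*p) (b*r) X Y h) hcq
      _ = (X+Y)^2 * ((a*p+b*r)*(c*q+d*s)) * (a*p) := by
          linear_combination (-(X+Y)^2) * eN

set_option maxHeartbeats 800000 in
theorem stmt5 (A B : Matrix (Fin 2) (Fin 2) ℝ)
    (hA : ∀ i j, 0 < A i j) (hB : ∀ i j, 0 < B i j)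
    (R : Matrix (Fin 2) (Fin 2) ℝ → ℝ)
    (hR : ∀ M, R M = max (M 0 0 * M 1 1 / (M 0 1 * M 1 0))
                        (M 0 1 * M 1 0 / (M 0 0 * M 1 1))) :
    R (A * B) ≤
      ((1 + Real.sqrt (R A * R B)) / (Real.sqrt (R A) + Real.sqrt (R B))) ^ 2 := by
  have ha := hA 0 0; have hb := hA 0 1; have hc := hA 1 0; have hd := hA 1 1
  have hp := hB 0 0; have hq := hB 0 1; have hr := hB 1 0; have hs := hB 1 1
  rw [hR, hR, hR]
  simp only [Matrix.mul_apply, Fin.sum_univ_two]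
  set RA := max (A 0 0 * A 1 1 / (A 0 1 * A 1 0)) (A 0 1 * A 1 0 / (A 0 0 * A 1 1)) with hRAdef
  set RB := max (B 0 0 * B 1 1 / (B 0 1 * B 1 0)) (B 0 1 * B 1 0 / (B 0 0 * B 1 1)) with hRBdef
  have hRA1 : (1:ℝ) ≤ RA := by
    rcases le_total (A 0 1 * A 1 0) (A 0 0 * A 1 1) with h | h
    · exact le_max_of_le_left ((one_le_div (by positivity)).mpr h)
    · exact le_max_of_le_right ((one_le_div (by positivity)).mpr h)
  have hRB1 : (1:ℝ) ≤ RB := by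
    rcases le_total (B 0 1 * B 1 0) (B 0 0 * B 1 1) with h | h
    · exact le_max_of_le_left ((one_le_div (by positivity)).mpr h)
    · exact le_max_of_le_right ((one_le_div (by positivity)).mpr h)
  have hRA0 : (0:ℝ) ≤ RA := by linarith
  have hRB0 : (0:ℝ) ≤ RB := by linarith
  rw [Real.sqrt_mul hRA0]
  set SA := Real.sqrt RA with hSAdef
  set SB := Real.sqrt RB with hSBdef
  have hSA1 : (1:ℝ) ≤ SA := by
    have := Real.sqrt_le_sqrt hRA1; rwa [Real.sqrt_one] at this
  have hSB1 : (1:ℝ) ≤ SB := by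
    have := Real.sqrt_le_sqrt hRB1; rwa [Real.sqrt_one] at this
  have hSA0 : (0:ℝ) < SA := by linarith
  have hSB0 : (0:ℝ) < SB := by linarith
  have hSA2 : SA^2 = RA := Real.sq_sqrt hRA0
  have hSB2 : SB^2 = RB := Real.sq_sqrt hRB0
  have hSAi : SA⁻¹ ≤ 1 := by
    have h0 := inv_mul_cancel₀ (ne_of_gt hSA0)
    nlinarith [inv_pos.mpr hSA0]
  have hSBi : SB⁻¹ ≤ 1 := by
    have h0 := inv_mul_cancel₀ (ne_of_gt hSB0)
    nlinarith [inv_pos.mpr hSB0]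
  have hSAsq1 : (1:ℝ) ≤ SA^2 := by nlinarith
  have hSBsq1 : (1:ℝ) ≤ SB^2 := by nlinarith
  have hSAisq : SA⁻¹^2 ≤ 1 := by nlinarith [inv_pos.mpr hSA0]
  have hSBisq : SB⁻¹^2 ≤ 1 := by nlinarith [inv_pos.mpr hSB0]
  have iA : SA * SA⁻¹ = 1 := mul_inv_cancel₀ (ne_of_gt hSA0)
  have iB : SB * SB⁻¹ = 1 := mul_inv_cancel₀ (ne_of_gt hSB0)
  rcases le_or_gt (A 0 1 * A 1 0) (A 0 0 * A 1 1) with h1 | h1 <;>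
    rcases le_or_gt (B 0 1 * B 1 0) (B 0 0 * B 1 1) with h2 | h2
  · -- both ratios ≥ 1 : X = SA, Y = SB
    have eRA : RA = A 0 0 * A 1 1 / (A 0 1 * A 1 0) :=
      max_eq_left (le_trans ((div_le_one (by positivity)).mpr h1)
        ((one_le_div (by positivity)).mpr h1))
    have eRB : RB = B 0 0 * B 1 1 / (B 0 1 * B 1 0) :=
      max_eq_left (le_trans ((div_le_one (by positivity)).mpr h2)
        ((one_le_div (by positivity)).mpr h2))
    have hx : A 0 0 * A 1 1 = SA^2 * (A 0 1 * A 1 0) := by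
      rw [hSA2, eRA, div_mul_cancel₀ _ (by positivity : (0:ℝ) < A 0 1 * A 1 0).ne']
    have hy : B 0 0 * B 1 1 = SB^2 * (B 0 1 * B 1 0) := by
      rw [hSB2, eRB, div_mul_cancel₀ _ (by positivity : (0:ℝ) < B 0 1 * B 1 0).ne']
    exact master1 _ _ _ _ _ _ _ _ _ _ ha hb hc hd hp hq hr hs hSA0 hSB0 hx hy
      (by nlinarith [mul_nonneg (sub_nonneg.mpr hSAsq1) (sub_nonneg.mpr hSBsq1)])
  · -- x ≥ 1, y < 1 : X = SA, Y = SB⁻¹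
    have eRB : RB = B 0 1 * B 1 0 / (B 0 0 * B 1 1) :=
      max_eq_right (le_trans ((div_le_one (by positivity)).mpr h2.le)
        ((one_le_div (by positivity)).mpr h2.le))
    have eRA : RA = A 0 0 * A 1 1 / (A 0 1 * A 1 0) :=
      max_eq_left (le_trans ((div_le_one (by positivity)).mpr h1)
        ((one_le_div (by positivity)).mpr h1))
    have hx : A 0 0 * A 1 1 = SA^2 * (A 0 1 * A 1 0) := by
      rw [hSA2, eRA, div_mul_cancel₀ _ (by positivity : (0:ℝ) < A 0 1 * A 1 0).ne']
    have hy : B 0 0 * B 1 1 = (SB⁻¹)^2 * (B 0 1 * B 1 0) := by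
      rw [inv_pow, hSB2, eRB, inv_div,
        div_mul_cancel₀ _ (by positivity : (0:ℝ) < B 0 1 * B 1 0).ne']
    have key := master2 _ _ _ _ _ _ _ _ _ _ ha hb hc hd hp hq hr hs hSA0
      (inv_pos.mpr hSB0) hx hy
      (mul_nonpos_iff.mpr (Or.inr ⟨by linarith, by linarith⟩))
    have hconv : (SA + SB⁻¹)/(1 + SA * SB⁻¹) = (1 + SA*SB)/(SA + SB) := by
      rw [div_eq_div_iff (by positivity) (by positivity)]
      linear_combination (1 - SA^2) * iB
    rwa [hconv] at key
  · -- x < 1, y ≥ 1 : X = SA⁻¹, Y = SB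
    have eRA : RA = A 0 1 * A 1 0 / (A 0 0 * A 1 1) :=
      max_eq_right (le_trans ((div_le_one (by positivity)).mpr h1.le)
        ((one_le_div (by positivity)).mpr h1.le))
    have eRB : RB = B 0 0 * B 1 1 / (B 0 1 * B 1 0) :=
      max_eq_left (le_trans ((div_le_one (by positivity)).mpr h2)
        ((one_le_div (by positivity)).mpr h2))
    have hx : A 0 0 * A 1 1 = (SA⁻¹)^2 * (A 0 1 * A 1 0) := by
      rw [inv_pow, hSA2, eRA, inv_div,
        div_mul_cancel₀ _ (by positivity : (0:ℝ) < A 0 1 * A 1 0).ne']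
    have hy : B 0 0 * B 1 1 = SB^2 * (B 0 1 * B 1 0) := by
      rw [hSB2, eRB, div_mul_cancel₀ _ (by positivity : (0:ℝ) < B 0 1 * B 1 0).ne']
    have key := master2 _ _ _ _ _ _ _ _ _ _ ha hb hc hd hp hq hr hs
      (inv_pos.mpr hSA0) hSB0 hx hy
      (mul_nonpos_iff.mpr (Or.inl ⟨by linarith, by linarith⟩))
    have hconv : (SA⁻¹ + SB)/(1 + SA⁻¹ * SB) = (1 + SA*SB)/(SA + SB) := by
      rw [div_eq_div_iff (by positivity) (by positivity)]
      linear_combination (1 - SB^2) * iA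
    rwa [hconv] at key
  · -- both < 1 : X = SA⁻¹, Y = SB⁻¹
    have eRA : RA = A 0 1 * A 1 0 / (A 0 0 * A 1 1) :=
      max_eq_right (le_trans ((div_le_one (by positivity)).mpr h1.le)
        ((one_le_div (by positivity)).mpr h1.le))
    have eRB : RB = B 0 1 * B 1 0 / (B 0 0 * B 1 1) :=
      max_eq_right (le_trans ((div_le_one (by positivity)).mpr h2.le)
        ((one_le_div (by positivity)).mpr h2.le))
    have hx : A 0 0 * A 1 1 = (SA⁻¹)^2 * (A 0 1 * A 1 0) := by
      rw [inv_pow, hSA2, eRA, inv_div,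
        div_mul_cancel₀ _ (by positivity : (0:ℝ) < A 0 1 * A 1 0).ne']
    have hy : B 0 0 * B 1 1 = (SB⁻¹)^2 * (B 0 1 * B 1 0) := by
      rw [inv_pow, hSB2, eRB, inv_div,
        div_mul_cancel₀ _ (by positivity : (0:ℝ) < B 0 1 * B 1 0).ne']
    have key := master1 _ _ _ _ _ _ _ _ _ _ ha hb hc hd hp hq hr hs
      (inv_pos.mpr hSA0) (inv_pos.mpr hSB0) hx hy
      (mul_nonneg (by linarith) (by linarith))
    have hconv : (1 + SA⁻¹ * SB⁻¹)/(SA⁻¹ + SB⁻¹) = (1 + SA*SB)/(SA + SB) := by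
      rw [div_eq_div_iff (by positivity) (by positivity)]
      linear_combination (SB⁻¹ - SB)*iA + (SA⁻¹ - SA)*iB
    rwa [hconv] at key
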